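/- Let G be a Carnot group with homogeneous distance d and suppose there are L > 0 and a Riemannian distance ρ on G such that |d_e(x) − d_e(y)| ≤ L ρ(x,y) for all x, y in the annulus B(e,2) \ B(e,1/2). Then every horofunction f of (G,d) is constant along the cosets of the commutator subgroup [G,G]: f(xζ) = f(x) for all x ∈ G and ζ ∈ [G,G]. -/

import Mathlib

/-- The Heisenberg group, coordinatized as `ℝ² × ℝ`. -/
abbrev H : Type := (ℝ × ℝ) × ℝ

/-- The standard symplectic form on the plane. -/
noncomputable def symp (v w : ℝ × ℝ) : ℝ := v.1 * w.2 - v.2 * w.1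

/-- The Heisenberg group multiplication `(v,t)(w,s) = (v+w, t+s+½ω(v,w))`. -/
noncomputable def Hmul (p q : H) : H := (p.1 + q.1, p.2 + q.2 + symp p.1 q.1 / 2)

/-- Inversion in the Heisenberg group. -/
noncomputable def Hinv (p : H) : H := (-p.1, -p.2)

/-- The homogeneous dilations `δ_λ(v,t) = (λv, λ²t)` of the Heisenberg group. -/
noncomputable def Hdil (l : ℝ) (p : H) : H := (l • p.1, l ^ 2 * p.2)


/-- (Vertical invariance of horofunctions, for the Carnot group `ℍ`.) Let `d` be a
homogeneous distance on the Heisenberg group such that `d_e` is `L`-Lipschitz with respect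
to a Riemannian distance (here the standard product distance of `ℝ² × ℝ`) on the annulus
`B(e,2) \ B(e,1/2)`. Then every horofunction `f` of `(ℍ,d)` — a limit, uniformly on
compact sets, of `x ↦ d(q_n,x) − d(q_n,e)` along a sequence `q_n → ∞` — is constant
along cosets of the commutator subgroup `[ℍ,ℍ] = {((0,0),z)}`. -/
lemma Hmul_zero (a : H) : Hmul a 0 = a := by
  simp [Hmul, symp]
lemma zero_Hmul (a : H) : Hmul 0 a = a := by
  simp [Hmul, symp]
lemma Hmul_Hinv (a : H) : Hmul a (Hinv a) = 0 := by
  simp [Hmul, Hinv, symp]; ring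
lemma Hinv_Hmul (a : H) : Hmul (Hinv a) a = 0 := by
  simp [Hmul, Hinv, symp]; ring
lemma Hmul_assoc (a b c : H) : Hmul (Hmul a b) c = Hmul a (Hmul b c) := by
  simp only [Hmul, symp, Prod.mk.injEq, Prod.ext_iff, Prod.fst_add, Prod.snd_add]
  refine ⟨⟨by ring, by ring⟩, by ring⟩
lemma Hdil_Hmul (l : ℝ) (a b : H) : Hdil l (Hmul a b) = Hmul (Hdil l a) (Hdil l b) := by
  simp only [Hdil, Hmul, symp, Prod.mk.injEq, Prod.ext_iff, Prod.fst_add, Prod.snd_add,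
    Prod.smul_fst, Prod.smul_snd, smul_eq_mul]
  refine ⟨⟨by ring, by ring⟩, by ring⟩
lemma Hdil_zero (l : ℝ) : Hdil l 0 = 0 := by simp [Hdil]
lemma Hdil_vert (l u : ℝ) : Hdil l ((0 : ℝ × ℝ), u) = ((0 : ℝ × ℝ), l ^ 2 * u) := by
  simp [Hdil]
lemma Hmul_vert (a : H) (u : ℝ) : Hmul a ((0 : ℝ × ℝ), u) = (a.1, a.2 + u) := by
  simp [Hmul, symp]
lemma Hcomm (p : H) (w : ℝ × ℝ) :
    Hmul (Hmul (Hmul p ((w, (0:ℝ)) : H)) (Hinv p)) (Hinv ((w, (0:ℝ)) : H)) =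
      ((0 : ℝ × ℝ), symp p.1 w) := by
  simp only [Hmul, Hinv, symp, Prod.mk.injEq, Prod.ext_iff, Prod.fst_add, Prod.snd_add,
    Prod.fst_neg, Prod.snd_neg, Prod.fst_zero, Prod.snd_zero]
  refine ⟨⟨by ring, by ring⟩, by ring⟩
lemma Hkill (p : H) : Hmul p ((-p.1, (0:ℝ)) : H) = ((0 : ℝ × ℝ), p.2) := by
  simp only [Hmul, symp, Prod.mk.injEq, Prod.ext_iff, Prod.fst_add, Prod.snd_add,
    Prod.fst_neg, Prod.snd_neg, Prod.fst_zero, Prod.snd_zero]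
  refine ⟨⟨by ring, by ring⟩, by ring⟩
lemma dist_pair (a b : H) :
    dist a b = max (max |a.1.1 - b.1.1| |a.1.2 - b.1.2|) |a.2 - b.2| := by
  simp [Prod.dist_eq, Real.dist_eq]

open Filter
section
variable (d : H → H → ℝ)
  (hd_eq : ∀ x y : H, d x y = 0 ↔ x = y)
  (hd_symm : ∀ x y : H, d x y = d y x)
  (hd_tri : ∀ x y z : H, d x z ≤ d x y + d y z)
  (hli : ∀ g x y : H, d (Hmul g x) (Hmul g y) = d x y)
  (hhom : ∀ l : ℝ, 0 < l → ∀ x y : H, d (Hdil l x) (Hdil l y) = l * d x y)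

include hd_eq hd_symm hd_tri in
lemma dnn : ∀ a b : H, 0 ≤ d a b := by
  intro a b
  have h1 : d a a = 0 := (hd_eq a a).2 rfl
  have h2 := hd_tri a b a
  have h3 := hd_symm a b
  linarith

include hli in
lemma dtrans (a b : H) : d a (Hmul a b) = d 0 b := by
  have := hli a 0 b; rwa [Hmul_zero] at this

include hd_tri hli in
lemma dsub (a b : H) : d 0 (Hmul a b) ≤ d 0 a + d 0 b := by
  have h1 := hd_tri 0 a (Hmul a b)
  have h2 := dtrans d hli a b
  linarith

include hd_symm hli in
lemma dinv (a : H) : d 0 (Hinv a) = d 0 a := by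
  have := hli a 0 (Hinv a)
  rw [Hmul_zero, Hmul_Hinv] at this
  rw [← this, hd_symm]

include hhom in
lemma dhom0 (l : ℝ) (hl : 0 < l) (p : H) : d 0 (Hdil l p) = l * d 0 p := by
  have := hhom l hl 0 p; rwa [Hdil_zero] at this
end

section
variable (d : H → H → ℝ)
  (hd_eq : ∀ x y : H, d x y = 0 ↔ x = y)
  (hd_symm : ∀ x y : H, d x y = d y x)
  (hd_tri : ∀ x y z : H, d x z ≤ d x y + d y z)
  (hli : ∀ g x y : H, d (Hmul g x) (Hmul g y) = d x y)
  (hhom : ∀ l : ℝ, 0 < l → ∀ x y : H, d (Hdil l x) (Hdil l y) = l * d x y)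
  (L : ℝ) (hL : 0 < L)
  (hLip : ∀ x y : H, 1 / 2 ≤ d 0 x → d 0 x < 2 → 1 / 2 ≤ d 0 y → d 0 y < 2 →
      |d 0 x - d 0 y| ≤ L * dist x y)

-- Fact 1
include hd_eq hd_symm hd_tri hhom hL hLip in
lemma fact1 (v : ℝ × ℝ) (t : ℝ) :
    d 0 ((v, t) : H) ≤ 2 * L * ‖v‖ ∨ (d 0 ((v, t) : H)) ^ 2 ≤ 6 * L * |t| := by
  set r := d 0 ((v, t) : H) with hr
  rcases eq_or_lt_of_le (dnn d hd_eq hd_symm hd_tri 0 ((v, t) : H)) with h0 | h0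
  · left
    rw [← hr] at h0
    rw [← h0]
    positivity
  · rw [← hr] at h0
    set a : H := Hdil (1 / r) ((v, t) : H) with ha
    have hda : d 0 a = 1 := by
      rw [ha, dhom0 d hhom _ (by positivity)]
      field_simp
      exact hr.symm
    set b : H := Hdil (3 / 2) a with hb
    have hdb : d 0 b = 3 / 2 := by
      rw [hb, dhom0 d hhom _ (by norm_num), hda]; norm_num
    have hlip := hLip a b (by rw [hda]; norm_num) (by rw [hda]; norm_num)
      (by rw [hdb]; norm_num) (by rw [hdb]; norm_num)
    rw [hda, hdb, show |(1:ℝ) - 3/2| = 1/2 by norm_num] at hlip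
    have hv1 : |v.1| ≤ ‖v‖ := by
      calc |v.1| = ‖v.1‖ := (Real.norm_eq_abs _).symm
      _ ≤ ‖v‖ := norm_fst_le v
    have hv2 : |v.2| ≤ ‖v‖ := by
      calc |v.2| = ‖v.2‖ := (Real.norm_eq_abs _).symm
      _ ≤ ‖v‖ := norm_snd_le v
    have hv0 : (0:ℝ) ≤ ‖v‖ := norm_nonneg v
    have ht0 : (0:ℝ) ≤ |t| := abs_nonneg t
    have h3t : (0:ℝ) ≤ 3 * |t| / r := by positivity
    have e1 : a.1.1 - b.1.1 = -(v.1 / (2 * r)) := by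
      simp [ha, hb, Hdil]; ring
    have e2 : a.1.2 - b.1.2 = -(v.2 / (2 * r)) := by
      simp [ha, hb, Hdil]; ring
    have e3 : a.2 - b.2 = -(5 * t / (4 * r ^ 2)) := by
      simp [ha, hb, Hdil]; ring
    have hdist : dist a b ≤ (‖v‖ + 3 * |t| / r) / (2 * r) := by
      rw [dist_pair, e1, e2, e3, abs_neg, abs_neg, abs_neg]
      refine max_le (max_le ?_ ?_) ?_
      · rw [abs_div, abs_of_pos (by positivity : (0:ℝ) < 2 * r)]
        gcongr
        linarith
      · rw [abs_div, abs_of_pos (by positivity : (0:ℝ) < 2 * r)]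
        gcongr
        linarith
      · have h5 : |5 * t / (4 * r ^ 2)| = 5 * |t| / (4 * r ^ 2) := by
          rw [abs_div, abs_of_pos (by positivity : (0:ℝ) < 4 * r ^ 2), abs_mul,
            abs_of_nonneg (by norm_num : (0:ℝ) ≤ 5)]
        rw [h5, div_le_div_iff₀ (by positivity) (by positivity)]
        have h12 : 3 * |t| / r * (4 * r ^ 2) = 12 * |t| * r := by
          field_simp; ring
        nlinarith [mul_nonneg ht0 h0.le, mul_nonneg (mul_nonneg hv0 h0.le) h0.le]
    have hkey : r ≤ L * (‖v‖ + 3 * |t| / r) := by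
      have h1 : (1:ℝ)/2 ≤ L * ((‖v‖ + 3 * |t| / r) / (2 * r)) :=
        le_trans hlip (by gcongr)
      rw [mul_div_assoc'] at h1
      have h2 := (le_div_iff₀ (by positivity : (0:ℝ) < 2 * r)).1 h1
      linarith
    rcases le_total (3 * |t| / r) ‖v‖ with hc | hc
    · left; nlinarith [mul_le_mul_of_nonneg_left hc hL.le]
    · right
      have h1 : r ≤ L * (2 * (3 * |t| / r)) := by
        nlinarith [mul_le_mul_of_nonneg_left hc hL.le]
      have h2 : r * r ≤ L * (2 * (3 * |t| / r)) * r :=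
        mul_le_mul_of_nonneg_right h1 h0.le
      have h3 : L * (2 * (3 * |t| / r)) * r = 6 * L * |t| := by
        field_simp; ring
      nlinarith
end

section
variable (d : H → H → ℝ)
  (hd_eq : ∀ x y : H, d x y = 0 ↔ x = y)
  (hd_symm : ∀ x y : H, d x y = d y x)
  (hd_tri : ∀ x y z : H, d x z ≤ d x y + d y z)
  (hli : ∀ g x y : H, d (Hmul g x) (Hmul g y) = d x y)
  (hhom : ∀ l : ℝ, 0 < l → ∀ x y : H, d (Hdil l x) (Hdil l y) = l * d x y)
  (L : ℝ) (hL : 0 < L)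
  (hLip : ∀ x y : H, 1 / 2 ≤ d 0 x → d 0 x < 2 → 1 / 2 ≤ d 0 y → d 0 y < 2 →
      |d 0 x - d 0 y| ≤ L * dist x y)

include hd_eq hd_symm hd_tri hhom hL hLip in
lemma dhoriz (w : ℝ × ℝ) : d 0 ((w, (0:ℝ)) : H) ≤ 2 * L * ‖w‖ := by
  rcases fact1 d hd_eq hd_symm hd_tri hhom L hL hLip w 0 with h | h
  · exact h
  · have h0 := dnn d hd_eq hd_symm hd_tri 0 ((w, (0:ℝ)) : H)
    have hw : (0:ℝ) ≤ ‖w‖ := norm_nonneg w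
    rw [abs_zero, mul_zero] at h
    have hsq : d 0 ((w, (0:ℝ)) : H) ^ 2 = 0 := le_antisymm h (sq_nonneg _)
    have hz : d 0 ((w, (0:ℝ)) : H) = 0 := by
      exact (pow_eq_zero_iff (by norm_num : (2:ℕ) ≠ 0)).1 hsq
    rw [hz]
    positivity

include hd_eq hd_symm hd_tri in
lemma c0_pos : 0 < min (d 0 (((0:ℝ×ℝ), (1:ℝ)) : H)) (d 0 (((0:ℝ×ℝ), (-1:ℝ)) : H)) := by
  have h1 : d 0 (((0:ℝ×ℝ), (1:ℝ)) : H) ≠ 0 := by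
    intro h
    have := (hd_eq _ _).1 h
    simp [Prod.ext_iff] at this
  have h2 : d 0 (((0:ℝ×ℝ), (-1:ℝ)) : H) ≠ 0 := by
    intro h
    have := (hd_eq _ _).1 h
    simp [Prod.ext_iff] at this
  have n1 := dnn d hd_eq hd_symm hd_tri 0 (((0:ℝ×ℝ), (1:ℝ)) : H)
  have n2 := dnn d hd_eq hd_symm hd_tri 0 (((0:ℝ×ℝ), (-1:ℝ)) : H)
  apply lt_min <;> [exact lt_of_le_of_ne n1 (Ne.symm h1); exact lt_of_le_of_ne n2 (Ne.symm h2)]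

include hd_eq hd_symm hd_tri hhom in
lemma dvert (u : ℝ) :
    min (d 0 (((0:ℝ×ℝ), (1:ℝ)) : H)) (d 0 (((0:ℝ×ℝ), (-1:ℝ)) : H)) * Real.sqrt |u|
      ≤ d 0 (((0:ℝ×ℝ), u) : H) := by
  set c0 := min (d 0 (((0:ℝ×ℝ), (1:ℝ)) : H)) (d 0 (((0:ℝ×ℝ), (-1:ℝ)) : H)) with hc0
  rcases lt_trichotomy u 0 with h | h | h
  · have hpos : 0 < Real.sqrt (-u) := Real.sqrt_pos.2 (by linarith)
    have he : Hdil (Real.sqrt (-u)) (((0:ℝ×ℝ), (-1:ℝ)) : H) = (((0:ℝ×ℝ), u) : H) := by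
      rw [Hdil_vert, Real.sq_sqrt (by linarith : (0:ℝ) ≤ -u)]
      norm_num
    have := dhom0 d hhom (Real.sqrt (-u)) hpos (((0:ℝ×ℝ), (-1:ℝ)) : H)
    rw [he] at this
    rw [this, abs_of_neg h]
    have hmin : c0 ≤ d 0 (((0:ℝ×ℝ), (-1:ℝ)) : H) := min_le_right _ _
    nlinarith [Real.sqrt_nonneg (-u)]
  · subst h
    simp only [abs_zero, Real.sqrt_zero, mul_zero]
    exact dnn d hd_eq hd_symm hd_tri _ _
  · have hpos : 0 < Real.sqrt u := Real.sqrt_pos.2 h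
    have he : Hdil (Real.sqrt u) (((0:ℝ×ℝ), (1:ℝ)) : H) = (((0:ℝ×ℝ), u) : H) := by
      rw [Hdil_vert, Real.sq_sqrt h.le]
      norm_num
    have := dhom0 d hhom (Real.sqrt u) hpos (((0:ℝ×ℝ), (1:ℝ)) : H)
    rw [he] at this
    rw [this, abs_of_pos h]
    have hmin : c0 ≤ d 0 (((0:ℝ×ℝ), (1:ℝ)) : H) := min_le_left _ _
    nlinarith [Real.sqrt_nonneg u]
end

section
variable (d : H → H → ℝ)
  (hd_eq : ∀ x y : H, d x y = 0 ↔ x = y)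
  (hd_symm : ∀ x y : H, d x y = d y x)
  (hd_tri : ∀ x y z : H, d x z ≤ d x y + d y z)
  (hli : ∀ g x y : H, d (Hmul g x) (Hmul g y) = d x y)
  (hhom : ∀ l : ℝ, 0 < l → ∀ x y : H, d (Hdil l x) (Hdil l y) = l * d x y)
  (L : ℝ) (hL : 0 < L)
  (hLip : ∀ x y : H, 1 / 2 ≤ d 0 x → d 0 x < 2 → 1 / 2 ≤ d 0 y → d 0 y < 2 →
      |d 0 x - d 0 y| ≤ L * dist x y)

include hd_eq hd_symm hd_tri hli hhom hL hLip in
lemma dproper (M : ℝ) (hM : 0 ≤ M) :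
    ∃ C : ℝ, 0 ≤ C ∧ ∀ p : H, d 0 p ≤ M → dist p 0 ≤ C := by
  set c0 := min (d 0 (((0:ℝ×ℝ), (1:ℝ)) : H)) (d 0 (((0:ℝ×ℝ), (-1:ℝ)) : H)) with hc0def
  have hc0 : 0 < c0 := c0_pos d hd_eq hd_symm hd_tri
  set C1 : ℝ := max 1 (((2 * M + 4 * L) / c0) ^ 2) with hC1def
  have hC1nn : (0:ℝ) ≤ C1 := le_trans zero_le_one (le_max_left _ _)
  set C2 : ℝ := ((M + 2 * L * C1) / c0) ^ 2 with hC2def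
  have hC2nn : (0:ℝ) ≤ C2 := sq_nonneg _
  -- Step A : bound on the horizontal part
  have hA : ∀ p : H, d 0 p ≤ M → ‖p.1‖ ≤ C1 := by
    intro p hp
    rcases le_or_gt ‖p.1‖ 1 with h | h
    · exact le_trans h (le_max_left _ _)
    have hm : (0:ℝ) < ‖p.1‖ := lt_trans one_pos h
    set v : ℝ × ℝ := p.1 with hv
    set w : ℝ × ℝ := (‖v‖)⁻¹ • (-v.2, v.1) with hw
    have hw0 : ‖((-v.2, v.1) : ℝ × ℝ)‖ = ‖v‖ := by
      simp [Prod.norm_def, Real.norm_eq_abs, max_comm]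
    have hwn : ‖w‖ = 1 := by
      rw [hw, norm_smul, hw0, norm_inv, Real.norm_eq_abs, abs_of_pos hm]
      field_simp
    have hsymp : symp v w = (‖v‖)⁻¹ * (v.1 ^ 2 + v.2 ^ 2) := by
      simp only [symp, hw, Prod.smul_fst, Prod.smul_snd, smul_eq_mul]
      ring
    have hm2 : ‖v‖ ^ 2 ≤ v.1 ^ 2 + v.2 ^ 2 := by
      have hmdef : ‖v‖ = max |v.1| |v.2| := by
        simp [Prod.norm_def, Real.norm_eq_abs]
      rcases max_choice |v.1| |v.2| with hch | hch <;> rw [hmdef, hch]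
      · nlinarith [sq_abs v.1, sq_nonneg v.2]
      · nlinarith [sq_abs v.2, sq_nonneg v.1]
    have hsge : ‖v‖ ≤ symp v w := by
      rw [hsymp]
      rw [← mul_le_mul_iff_right₀ hm, ← mul_assoc, mul_inv_cancel₀ (ne_of_gt hm), one_mul]
      nlinarith
    -- the commutator
    have hP := Hcomm p w
    have hdP : d 0 (((0:ℝ×ℝ), symp p.1 w) : H) ≤ 2 * M + 4 * L := by
      rw [← hP]
      have t1 := dsub d hd_tri hli (Hmul (Hmul p ((w, (0:ℝ)) : H)) (Hinv p)) (Hinv ((w, (0:ℝ)) : H))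
      have t2 := dsub d hd_tri hli (Hmul p ((w, (0:ℝ)) : H)) (Hinv p)
      have t3 := dsub d hd_tri hli p ((w, (0:ℝ)) : H)
      have t4 := dinv d hd_symm hli p
      have t5 := dinv d hd_symm hli ((w, (0:ℝ)) : H)
      have t6 := dhoriz d hd_eq hd_symm hd_tri hhom L hL hLip w
      rw [hwn] at t6
      linarith
    have hvert := dvert d hd_eq hd_symm hd_tri hhom (symp p.1 w)
    rw [← hc0def] at hvert
    have habs : |symp p.1 w| = symp p.1 w := abs_of_nonneg (by rw [← hv] at *; linarith [norm_nonneg v])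
    rw [habs] at hvert
    have hs1 : Real.sqrt ‖v‖ ≤ Real.sqrt (symp v w) := Real.sqrt_le_sqrt hsge
    have hs2 : c0 * Real.sqrt ‖v‖ ≤ 2 * M + 4 * L := by
      have : c0 * Real.sqrt (symp v w) ≤ 2 * M + 4 * L := le_trans hvert hdP
      nlinarith [Real.sqrt_nonneg ‖v‖]
    have hs3 : Real.sqrt ‖v‖ ≤ (2 * M + 4 * L) / c0 := by
      rw [le_div_iff₀ hc0]
      linarith
    have hs4 : ‖v‖ ≤ ((2 * M + 4 * L) / c0) ^ 2 := by
      have hsq := Real.sq_sqrt (le_of_lt hm)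
      calc ‖v‖ = Real.sqrt ‖v‖ ^ 2 := hsq.symm
      _ ≤ ((2 * M + 4 * L) / c0) ^ 2 := by
          apply pow_le_pow_left₀ (Real.sqrt_nonneg _) hs3
    exact le_trans hs4 (le_max_right _ _)
  -- Step B : bound on the vertical part
  have hB : ∀ p : H, d 0 p ≤ M → |p.2| ≤ C2 := by
    intro p hp
    have hQ := Hkill p
    have hdQ : d 0 (((0:ℝ×ℝ), p.2) : H) ≤ M + 2 * L * C1 := by
      rw [← hQ]
      have t1 := dsub d hd_tri hli p ((-p.1, (0:ℝ)) : H)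
      have t2 := dhoriz d hd_eq hd_symm hd_tri hhom L hL hLip (-p.1)
      rw [norm_neg] at t2
      have t3 := hA p hp
      nlinarith
    have hvert := dvert d hd_eq hd_symm hd_tri hhom p.2
    rw [← hc0def] at hvert
    have hs2 : c0 * Real.sqrt |p.2| ≤ M + 2 * L * C1 := le_trans hvert hdQ
    have hs3 : Real.sqrt |p.2| ≤ (M + 2 * L * C1) / c0 := by
      rw [le_div_iff₀ hc0]
      linarith
    calc |p.2| = Real.sqrt |p.2| ^ 2 := (Real.sq_sqrt (abs_nonneg _)).symm
    _ ≤ ((M + 2 * L * C1) / c0) ^ 2 := by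
        apply pow_le_pow_left₀ (Real.sqrt_nonneg _) hs3
  refine ⟨max C1 C2, le_trans hC1nn (le_max_left _ _), fun p hp => ?_⟩
  rw [dist_pair]
  have h1 : |p.1.1| ≤ ‖p.1‖ := by
    calc |p.1.1| = ‖p.1.1‖ := (Real.norm_eq_abs _).symm
    _ ≤ ‖p.1‖ := norm_fst_le p.1
  have h2 : |p.1.2| ≤ ‖p.1‖ := by
    calc |p.1.2| = ‖p.1.2‖ := (Real.norm_eq_abs _).symm
    _ ≤ ‖p.1‖ := norm_snd_le p.1
  have hA' := hA p hp
  have hB' := hB p hp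
  simp only [Prod.fst_zero, Prod.snd_zero, sub_zero]
  exact max_le (max_le (le_trans h1 (le_trans hA' (le_max_left _ _)))
    (le_trans h2 (le_trans hA' (le_max_left _ _)))) (le_trans hB' (le_max_right _ _))
end


theorem statement14 (d : H → H → ℝ)
    (hd_eq : ∀ x y : H, d x y = 0 ↔ x = y)
    (hd_symm : ∀ x y : H, d x y = d y x)
    (hd_tri : ∀ x y z : H, d x z ≤ d x y + d y z)
    (hli : ∀ g x y : H, d (Hmul g x) (Hmul g y) = d x y)
    (hhom : ∀ l : ℝ, 0 < l → ∀ x y : H, d (Hdil l x) (Hdil l y) = l * d x y)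
    (L : ℝ) (hL : 0 < L)
    (hLip : ∀ x y : H, 1 / 2 ≤ d 0 x → d 0 x < 2 → 1 / 2 ≤ d 0 y → d 0 y < 2 →
      |d 0 x - d 0 y| ≤ L * dist x y)
    (f : H → ℝ) (q : ℕ → H)
    (hesc : ∀ K : Set H, IsCompact K → ∀ᶠ n in Filter.atTop, q n ∉ K)
    (hconv : ∀ K : Set H, IsCompact K → TendstoUniformlyOn
      (fun (n : ℕ) (x : H) => d (q n) x - d (q n) 0) f Filter.atTop K) :
    ∀ (x : H) (z : ℝ), f (Hmul x ((0 : ℝ × ℝ), z)) = f x := by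
  intro x z
  set ζ : H := ((0 : ℝ × ℝ), z) with hζ
  have hnn := dnn d hd_eq hd_symm hd_tri
  -- d-distance to the sequence tends to infinity
  have hRinf : Filter.Tendsto (fun n => d (q n) x) Filter.atTop Filter.atTop := by
    rw [Filter.tendsto_atTop]
    intro M
    obtain ⟨C, hC0, hC⟩ := dproper d hd_eq hd_symm hd_tri hli hhom L hL hLip
      (max M 0 + d 0 x) (add_nonneg (le_max_right _ _) (hnn _ _))
    filter_upwards [hesc (Metric.closedBall (0:H) C) (isCompact_closedBall 0 C)] with n hn
    by_contra hcon
    push_neg at hcon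
    apply hn
    rw [Metric.mem_closedBall]
    have h1 : d 0 (q n) ≤ d 0 x + d x (q n) := hd_tri 0 x (q n)
    have h2 : d x (q n) = d (q n) x := hd_symm x (q n)
    have h3 : d 0 (q n) ≤ max M 0 + d 0 x := by
      have := le_max_left M 0; linarith
    exact hC (q n) h3
  -- the key estimate
  have key : ∀ n : ℕ, 1 ≤ d (q n) x → 2 * d 0 ζ ≤ d (q n) x →
      |d (q n) (Hmul x ζ) - d (q n) x| ≤ L * |z| / d (q n) x := by
    intro n h1 h2
    set R := d (q n) x with hRdef
    have hR0 : (0:ℝ) < R := lt_of_lt_of_le one_pos h1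
    set p : H := Hmul (Hinv (q n)) x with hpdef
    have hmulqp : Hmul (q n) p = x := by
      rw [hpdef, ← Hmul_assoc, Hmul_Hinv, zero_Hmul]
    have hdp : d 0 p = R := by
      have h := hli (q n) 0 p
      rw [Hmul_zero, hmulqp] at h
      rw [hRdef, ← h]
    have hdpz : d 0 (Hmul p ζ) = d (q n) (Hmul x ζ) := by
      have h := hli (q n) 0 (Hmul p ζ)
      rw [Hmul_zero, ← Hmul_assoc, hmulqp] at h
      rw [h]
    set a : H := Hdil R⁻¹ p with hadef
    have hRinv : (0:ℝ) < R⁻¹ := inv_pos.2 hR0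
    have hda : d 0 a = 1 := by
      rw [hadef, dhom0 d hhom _ hRinv, hdp, inv_mul_cancel₀ (ne_of_gt hR0)]
    have hζsmall : Hdil R⁻¹ ζ = ((0:ℝ×ℝ), z / R ^ 2) := by
      rw [hζ, Hdil_vert]
      congr 1
      field_simp
    set b : H := Hmul a (((0:ℝ×ℝ), z / R ^ 2) : H) with hbdef
    have hbeq : b = Hdil R⁻¹ (Hmul p ζ) := by
      rw [hbdef, Hdil_Hmul, hζsmall, hadef]
    have hdb : d 0 b = R⁻¹ * d 0 (Hmul p ζ) := by
      rw [hbeq, dhom0 d hhom _ hRinv]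
    have hab : d a b = R⁻¹ * d 0 ζ := by
      rw [hbdef, dtrans d hli a (((0:ℝ×ℝ), z / R ^ 2) : H), ← hζsmall,
        dhom0 d hhom _ hRinv]
    have heinv : R⁻¹ * (R / 2) = 1 / 2 := by field_simp
    have hsmall2 : d a b ≤ 1 / 2 := by
      rw [hab, ← heinv]
      exact mul_le_mul_of_nonneg_left (by linarith) hRinv.le
    have htri1 : d 0 b ≤ d 0 a + d a b := hd_tri 0 a b
    have htri2 : d 0 a ≤ d 0 b + d a b := by
      have h := hd_tri 0 b a
      have hs := hd_symm b a
      linarith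
    have hb_lo : 1 / 2 ≤ d 0 b := by rw [hda] at htri2; linarith
    have hb_hi : d 0 b < 2 := by rw [hda] at htri1; linarith
    have hlip := hLip a b (by rw [hda]; norm_num) (by rw [hda]; norm_num) hb_lo hb_hi
    have hdistab : dist a b = |z| / R ^ 2 := by
      rw [hbdef, Hmul_vert, dist_pair]
      simp only [sub_self, abs_zero, max_self]
      have he : a.2 - (a.2 + z / R ^ 2) = -(z / R ^ 2) := by ring
      rw [he, abs_neg, abs_div, abs_of_pos (by positivity : (0:ℝ) < R ^ 2)]
      exact max_eq_right (by positivity)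
    have hz1 : d 0 (Hmul p ζ) = R * d 0 b := by
      rw [hdb, ← mul_assoc, mul_inv_cancel₀ (ne_of_gt hR0), one_mul]
    have hfin : |d (q n) (Hmul x ζ) - d (q n) x| = R * |d 0 b - d 0 a| := by
      rw [← hdpz, hz1, ← hRdef]
      have : R = R * d 0 a := by rw [hda, mul_one]
      calc |R * d 0 b - R| = |R * d 0 b - R * d 0 a| := by rw [← this]
      _ = |R * (d 0 b - d 0 a)| := by ring_nf
      _ = |R| * |d 0 b - d 0 a| := abs_mul _ _
      _ = R * |d 0 b - d 0 a| := by rw [abs_of_pos hR0]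
    rw [hfin]
    rw [hdistab] at hlip
    have habs : |d 0 b - d 0 a| = |d 0 a - d 0 b| := abs_sub_comm _ _
    calc R * |d 0 b - d 0 a| ≤ R * (L * (|z| / R ^ 2)) := by
          rw [habs]
          exact mul_le_mul_of_nonneg_left hlip hR0.le
    _ = L * |z| / R := by field_simp
  -- limits
  have hx := (hconv {x} isCompact_singleton).tendsto_at (Set.mem_singleton x)
  have hxz := (hconv {Hmul x ζ} isCompact_singleton).tendsto_at (Set.mem_singleton (Hmul x ζ))
  have hdiff : Filter.Tendsto (fun n => d (q n) (Hmul x ζ) - d (q n) x) Filter.atTop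
      (nhds (f (Hmul x ζ) - f x)) := by
    have h := hxz.sub hx
    exact h.congr (fun n => by ring)
  have hbound : Filter.Tendsto (fun n => L * |z| / d (q n) x) Filter.atTop (nhds 0) :=
    Filter.Tendsto.div_atTop tendsto_const_nhds hRinf
  have hzero : Filter.Tendsto (fun n => d (q n) (Hmul x ζ) - d (q n) x) Filter.atTop (nhds 0) := by
    apply squeeze_zero_norm' ?_ hbound
    filter_upwards [hRinf.eventually_ge_atTop 1, hRinf.eventually_ge_atTop (2 * d 0 ζ)]
      with n hn1 hn2
    simpa [Real.norm_eq_abs] using key n hn1 hn2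
  have hfe := tendsto_nhds_unique hdiff hzero
  linarith
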